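/- Let q be a prime power, r ≥ 1 and 1 ≤ k ≤ q^r integers, α_1, …, α_k ∈ F_q^*, and N_1, …, N_k be k distinct integers in {0, …, q^r − 1} with base-q expansions N_i = Σ_{j=0}^{r−1} n_{i,j} q^j. Then there exist β_1, …, β_r ∈ F_q such that Σ_{i=1}^k α_i ∏_{j=0}^{r−1} β_{j+1}^{n_{i,j}} ≠ 0, with the convention 0^0 = 1. -/

import Mathlib

open MvPolynomial

private lemma digits_inj_aux (q : ℕ) : ∀ (r a b : ℕ), a < q ^ r → b < q ^ r →
    (∀ j < r, a / q ^ j % q = b / q ^ j % q) → a = b := by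
  intro r
  induction r with
  | zero => intro a b ha hb _; simp only [pow_zero, Nat.lt_one_iff] at ha hb; omega
  | succ r ih =>
    intro a b ha hb h
    have hq : 0 < q := by
      rcases Nat.eq_zero_or_pos q with h0 | h0
      · subst h0; simp at ha
      · exact h0
    have h0 : a % q = b % q := by simpa using h 0 (Nat.succ_pos r)
    have hdiv : a / q = b / q := by
      refine ih (a / q) (b / q) ?_ ?_ ?_
      · rw [Nat.div_lt_iff_lt_mul hq, ← pow_succ]; exact ha
      · rw [Nat.div_lt_iff_lt_mul hq, ← pow_succ]; exact hb
      · intro j hj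
        have := h (j + 1) (by omega)
        rw [pow_succ'] at this
        rwa [Nat.div_div_eq_div_mul, Nat.div_div_eq_div_mul]
    rw [← Nat.div_add_mod a q, ← Nat.div_add_mod b q, hdiv, h0]

/-- Let `Fq` be a finite field with `q` elements, `r ≥ 1`,
`1 ≤ k ≤ q^r`, `α : Fin k → Fqˣ`, and `N : Fin k → ℕ` injective with values in
`{0, …, q^r − 1}`, with base-`q` digits `n_{i,j} = (N i / q^j) % q`.  Then there
exist `β_1, …, β_r ∈ Fq` such that `∑ i, α i * ∏ j, (β j)^(n_{i,j}) ≠ 0`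
(with the convention `0^0 = 1`, as in Lean). -/
theorem stmt_0 (Fq : Type) [Field Fq] [Fintype Fq] (q : ℕ) (hq : Fintype.card Fq = q)
    (r k : ℕ) (hr : 1 ≤ r) (hk : 1 ≤ k) (hkq : k ≤ q ^ r)
    (α : Fin k → Fqˣ) (N : Fin k → ℕ) (hNinj : Function.Injective N)
    (hNlt : ∀ i, N i < q ^ r) :
    ∃ β : Fin r → Fq,
      ∑ i : Fin k, (α i : Fq) * ∏ j : Fin r, (β j) ^ ((N i / q ^ (j : ℕ)) % q) ≠ 0 := by
  classical
  have hq2 : 2 ≤ q := hq ▸ Fintype.one_lt_card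
  -- the digit exponent finsupp
  set d : Fin k → (Fin r →₀ ℕ) :=
    fun i => Finsupp.equivFunOnFinite.symm fun j => (N i / q ^ (j : ℕ)) % q with hd
  have hdinj : Function.Injective d := by
    intro i i' hii
    apply hNinj
    refine digits_inj_aux q r _ _ (hNlt i) (hNlt i') ?_
    intro j hj
    have := DFunLike.congr_fun hii ⟨j, hj⟩
    simpa [hd] using this
  set P : MvPolynomial (Fin r) Fq := ∑ i : Fin k, monomial (d i) ((α i : Fq)) with hP
  have hPne : P ≠ 0 := by
    intro h0
    have : coeff (d ⟨0, hk⟩) P = (α ⟨0, hk⟩ : Fq) := by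
      rw [hP, coeff_sum]
      rw [Finset.sum_eq_single (⟨0, hk⟩ : Fin k)]
      · simp [coeff_monomial]
      · intro i _ hi
        rw [coeff_monomial, if_neg fun h => hi (hdinj h)]
      · simp
    rw [h0] at this
    simp at this
    exact (α ⟨0, hk⟩).ne_zero this.symm
  have hPmem : P ∈ restrictDegree (Fin r) Fq (Fintype.card Fq - 1) := by
    rw [mem_restrictDegree]
    intro s hs j
    have := MvPolynomial.support_sum hs
    simp only [Finset.mem_biUnion] at this
    obtain ⟨i, _, hi⟩ := this
    have : s = d i := by
      have := MvPolynomial.support_monomial_subset hi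
      simpa using this
    subst this
    have : (N i / q ^ (j : ℕ)) % q < q := Nat.mod_lt _ (by omega)
    simp only [hd, Finsupp.coe_equivFunOnFinite_symm]
    omega
  by_contra hcon
  push_neg at hcon
  apply hPne
  apply MvPolynomial.eq_zero_of_eval_eq_zero (Fin r) Fq P _ hPmem
  intro v
  have := hcon v
  rw [hP] at *
  calc eval v (∑ i : Fin k, monomial (d i) ((α i : Fq)))
      = ∑ i : Fin k, (α i : Fq) * ∏ j : Fin r, (v j) ^ ((N i / q ^ (j : ℕ)) % q) := by
        rw [map_sum]
        refine Finset.sum_congr rfl fun i _ => ?_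
        rw [eval_monomial, Finsupp.prod_pow]
        simp [hd]
    _ = 0 := this
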